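/- Let $\mathcal{U}, \mathcal{V}$ be elements of an associative algebra satisfying $[\mathcal{V},\mathcal{U}] = a\mathcal{V} + b$. Then for every $n \geq 1$, $(\mathcal{U}\mathcal{V})^n = \sum_{k=1}^{n} b^{n-k} S(n,k)\, \mathcal{U}(\mathcal{U}+a)(\mathcal{U}+2a)\cdots(\mathcal{U}+(k-1)a)\,\mathcal{V}^k$, where $S(n,k)$ are Stirling numbers of the second kind. -/

import Mathlib

/-- The falling factorial `(z)_n = z(z-1)⋯(z-n+1)`. -/
noncomputable def fallC (z : ℂ) (n : ℕ) : ℂ := ∏ j ∈ Finset.range n, (z - j)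

lemma fallC_nat_eq_zero {m k : ℕ} (h : m < k) : fallC (m : ℂ) k = 0 := by
  apply Finset.prod_eq_zero (Finset.mem_range.2 h); simp

lemma nat_prod_sub (k : ℕ) : ∏ j ∈ Finset.range k, (k - j) = Nat.factorial k := by
  induction k with
  | zero => simp
  | succ k ih =>
    rw [Finset.prod_range_succ']
    simp only [Nat.succ_sub_succ]
    rw [ih, Nat.sub_zero, Nat.factorial_succ, Nat.mul_comm]

lemma fallC_nat_self (k : ℕ) : fallC (k : ℂ) k = (Nat.factorial k : ℂ) := by
  unfold fallC
  rw [← nat_prod_sub k, Nat.cast_prod]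
  apply Finset.prod_congr rfl
  intro j hj
  have : j ≤ k := (Finset.mem_range.1 hj).le
  push_cast [Nat.cast_sub this]
  ring

lemma fallC_succ (z : ℂ) (k : ℕ) : fallC z (k + 1) = fallC z k * (z - k) := by
  unfold fallC; rw [Finset.prod_range_succ]

lemma coeff_unique (N : ℕ) (d : ℕ → ℂ)
    (hd : ∀ z : ℂ, ∑ k ∈ Finset.Icc 1 N, d k * fallC z k = 0) :
    ∀ m ∈ Finset.Icc 1 N, d m = 0 := by
  intro m hm
  induction m using Nat.strong_induction_on with
  | _ m ih =>
    obtain ⟨hm1, hmN⟩ := Finset.mem_Icc.1 hm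
    have key := hd (m : ℂ)
    rw [Finset.sum_eq_single m (fun k hk hne => by
      obtain ⟨hk1, hkN⟩ := Finset.mem_Icc.1 hk
      rcases lt_or_gt_of_ne hne with hlt | hgt
      · rw [ih k hlt (Finset.mem_Icc.2 ⟨hk1, hkN⟩), zero_mul]
      · rw [fallC_nat_eq_zero hgt, mul_zero]) (fun hmem => absurd hm hmem)] at key
    rw [fallC_nat_self] at key
    have : (Nat.factorial m : ℂ) ≠ 0 := Nat.cast_ne_zero.2 (Nat.factorial_ne_zero m)
    exact (mul_eq_zero.1 key).resolve_right this

lemma stirling_rec (S : ℕ → ℕ → ℂ)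
    (hS : ∀ n : ℕ, 1 ≤ n → ∀ z : ℂ, z ^ n = ∑ k ∈ Finset.Icc 1 n, S n k * fallC z k)
    (n : ℕ) (hn : 1 ≤ n) :
    ∀ k ∈ Finset.Icc 1 (n + 1),
      S (n + 1) k = (if 2 ≤ k then S n (k - 1) else 0)
        + (if k ≤ n then (k : ℂ) * S n k else 0) := by
  set T : ℕ → ℂ := fun k => (if 2 ≤ k then S n (k - 1) else 0)
        + (if k ≤ n then (k : ℂ) * S n k else 0) with hT
  have hTsum : ∀ z : ℂ, ∑ k ∈ Finset.Icc 1 (n + 1), T k * fallC z k = z ^ (n + 1) := by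
    intro z
    have h1 : (Finset.Icc 1 (n+1)).filter (fun k => 2 ≤ k) = Finset.Icc 2 (n+1) := by
      ext k; simp [Finset.mem_filter, Finset.mem_Icc]; omega
    have h2 : (Finset.Icc 1 (n+1)).filter (fun k => k ≤ n) = Finset.Icc 1 n := by
      ext k; simp [Finset.mem_filter, Finset.mem_Icc]; omega
    simp only [hT, add_mul, Finset.sum_add_distrib, ite_mul, zero_mul]
    rw [← Finset.sum_filter, ← Finset.sum_filter, h1, h2]
    have hre : ∑ k ∈ Finset.Icc 2 (n+1), S n (k - 1) * fallC z k
        = ∑ k ∈ Finset.Icc 1 n, S n k * fallC z (k + 1) := by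
      rw [show (2:ℕ) = 1 + 1 from rfl, show n + 1 = n + 1 from rfl,
        ← Finset.map_add_right_Icc 1 n 1, Finset.sum_map]
      simp [addRightEmbedding_apply]
    rw [hre, ← Finset.sum_add_distrib]
    have : ∀ k ∈ Finset.Icc 1 n, S n k * fallC z (k+1) + (k:ℂ) * S n k * fallC z k
        = z * (S n k * fallC z k) := by
      intro k _
      rw [fallC_succ]; ring
    rw [Finset.sum_congr rfl this, ← Finset.mul_sum, ← hS n hn z, ← pow_succ']
  intro k hk
  have hzero : ∀ z : ℂ, ∑ k ∈ Finset.Icc 1 (n+1), (S (n+1) k - T k) * fallC z k = 0 := by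
    intro z
    simp only [sub_mul, Finset.sum_sub_distrib, hTsum z, ← hS (n+1) (by omega) z, sub_self]
  have := coeff_unique (n+1) (fun k => S (n+1) k - T k) hzero k hk
  have := sub_eq_zero.1 this
  simpa [hT] using this

lemma S_one_one (S : ℕ → ℕ → ℂ)
    (hS : ∀ n : ℕ, 1 ≤ n → ∀ z : ℂ, z ^ n = ∑ k ∈ Finset.Icc 1 n, S n k * fallC z k) :
    S 1 1 = 1 := by
  have := hS 1 le_rfl 1
  simpa [fallC] using this.symm

section Alg
variable {R : Type*} [Ring R] [Algebra ℂ R] (a b : ℂ) (U V : R)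

lemma comm_pow (h : V * U - U * V = a • V + algebraMap ℂ R b) :
    ∀ k : ℕ, V ^ (k+1) * U
      = (U + algebraMap ℂ R (((k:ℂ)+1) * a)) * V ^ (k+1)
        + algebraMap ℂ R (((k:ℂ)+1) * b) * V ^ k := by
  have hbase : V * U = (U + algebraMap ℂ R a) * V + algebraMap ℂ R b := by
    have h2 := sub_eq_iff_eq_add.1 h
    rw [h2, Algebra.smul_def]; noncomm_ring
  intro k
  induction k with
  | zero => simpa using hbase
  | succ k ih =>
    have key : (((k:ℂ)+1)+1) * a = ((k:ℂ)+1)*a + a := by ring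
    have keyb : (((k:ℂ)+1)+1) * b = ((k:ℂ)+1)*b + b := by ring
    have e1 : V ^ (k+1+1) * U = V * (V ^ (k+1) * U) := by
      rw [pow_succ', mul_assoc]
    rw [e1, ih]
    simp only [Nat.cast_add, Nat.cast_one]
    rw [key, keyb, map_add, map_add]
    set C := algebraMap ℂ R (((k:ℂ)+1) * a) with hC
    set D := algebraMap ℂ R (((k:ℂ)+1) * b) with hD
    have expand : V * ((U + C) * V ^ (k+1) + D * V ^ k)
        = (V*U)*V^(k+1) + (V*C)*V^(k+1) + (V*D)*V^k := by noncomm_ring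
    have ca : V * C = C * V := (Algebra.commutes _ _).symm
    have cd : V * D = D * V := (Algebra.commutes _ _).symm
    rw [expand, hbase, ca, cd]
    noncomm_ring
    rw [show V * (V ^ k * V) = V ^ k * (V * V) by
      rw [← mul_assoc, ← pow_mul_comm', mul_assoc]]
    rw [show V * V ^ k = V ^ k * V from (pow_mul_comm' V k).symm]
    abel
end Alg

theorem stmt_1 {R : Type*} [Ring R] [Algebra ℂ R] (a b : ℂ) (U V : R)
    (h : V * U - U * V = a • V + algebraMap ℂ R b)
    (S : ℕ → ℕ → ℂ)
    (hS : ∀ n : ℕ, 1 ≤ n → ∀ z : ℂ, z ^ n = ∑ k ∈ Finset.Icc 1 n, S n k * fallC z k)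
    (n : ℕ) (hn : 1 ≤ n) :
    (U * V) ^ n = ∑ k ∈ Finset.Icc 1 n,
      algebraMap ℂ R (b ^ (n - k) * S n k)
        * ((List.range k).map (fun j => U + algebraMap ℂ R ((j : ℂ) * a))).prod
        * V ^ k := by
  set Pr : ℕ → R := fun k => ((List.range k).map (fun j => U + algebraMap ℂ R ((j : ℂ) * a))).prod with hPr
  have hPsucc : ∀ k : ℕ, Pr (k+1) = Pr k * (U + algebraMap ℂ R ((k:ℂ)*a)) := by
    intro k
    simp [hPr, List.range_succ]
  have hterm : ∀ k : ℕ, 1 ≤ k →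
      Pr k * V ^ k * (U * V)
        = Pr (k+1) * V ^ (k+1) + algebraMap ℂ R ((k:ℂ)*b) * (Pr k * V ^ k) := by
    intro k hk
    obtain ⟨m, rfl⟩ := Nat.exists_eq_succ_of_ne_zero (Nat.one_le_iff_ne_zero.1 hk)
    have hc := comm_pow a b U V h m
    have hcast : ((m:ℂ)+1) = ((m+1 : ℕ) : ℂ) := by push_cast; ring
    calc Pr (m+1) * V ^ (m+1) * (U * V)
        = Pr (m+1) * (V ^ (m+1) * U) * V := by noncomm_ring
      _ = Pr (m+1) * ((U + algebraMap ℂ R (((m:ℂ)+1) * a)) * V ^ (m+1)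
            + algebraMap ℂ R (((m:ℂ)+1) * b) * V ^ m) * V := by rw [hc]
      _ = (Pr (m+1) * (U + algebraMap ℂ R (((m:ℂ)+1) * a))) * (V ^ (m+1) * V)
            + (Pr (m+1) * algebraMap ℂ R (((m:ℂ)+1) * b)) * (V ^ m * V) := by noncomm_ring
      _ = Pr (m+2) * V ^ (m+2) + algebraMap ℂ R (((m+1:ℕ):ℂ) * b) * (Pr (m+1) * V ^ (m+1)) := by
          rw [hcast, ← hPsucc (m+1), ← pow_succ, ← pow_succ,
            ← Algebra.commutes ((((m+1:ℕ)):ℂ) * b) (Pr (m+1)), mul_assoc]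
  induction n, hn using Nat.le_induction with
  | base =>
    rw [Finset.Icc_self, Finset.sum_singleton, S_one_one S hS]
    simp [List.range_succ]
  | succ n hn ih =>
    have hrec := stirling_rec S hS n hn
    rw [pow_succ, ih, Finset.sum_mul]
    -- rewrite each term
    have hterm2 : ∀ k ∈ Finset.Icc 1 n,
        algebraMap ℂ R (b ^ (n - k) * S n k) * Pr k * V ^ k * (U * V)
          = algebraMap ℂ R (b ^ (n - k) * S n k) * Pr (k+1) * V ^ (k+1)
            + algebraMap ℂ R (b ^ (n - k) * S n k * ((k:ℂ) * b)) * Pr k * V ^ k := by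
      intro k hk
      obtain ⟨hk1, hkn⟩ := Finset.mem_Icc.1 hk
      have e : algebraMap ℂ R (b ^ (n - k) * S n k) * Pr k * V ^ k * (U * V)
          = algebraMap ℂ R (b ^ (n - k) * S n k) * (Pr k * V ^ k * (U * V)) := by
        noncomm_ring
      rw [e, hterm k hk1, mul_add]
      congr 1
      · noncomm_ring
      · simp only [map_mul]
        noncomm_ring
    rw [Finset.sum_congr rfl hterm2, Finset.sum_add_distrib]
    -- now handle the target
    have htarget : ∀ k ∈ Finset.Icc 1 (n+1),
        algebraMap ℂ R (b ^ (n + 1 - k) * S (n+1) k) * Pr k * V ^ k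
          = (if 2 ≤ k then algebraMap ℂ R (b ^ (n + 1 - k) * S n (k-1)) * Pr k * V ^ k else 0)
            + (if k ≤ n then algebraMap ℂ R (b ^ (n + 1 - k) * ((k:ℂ) * S n k)) * Pr k * V ^ k else 0) := by
      intro k hk
      rw [hrec k hk]
      split_ifs with h1 h2 h3 <;> simp [mul_add, add_mul, map_add]
    rw [Finset.sum_congr rfl htarget, Finset.sum_add_distrib,
      ← Finset.sum_filter, ← Finset.sum_filter]
    have hf1 : (Finset.Icc 1 (n+1)).filter (fun k => 2 ≤ k) = Finset.Icc 2 (n+1) := by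
      ext k; simp [Finset.mem_filter, Finset.mem_Icc]; omega
    have hf2 : (Finset.Icc 1 (n+1)).filter (fun k => k ≤ n) = Finset.Icc 1 n := by
      ext k; simp [Finset.mem_filter, Finset.mem_Icc]; omega
    rw [hf1, hf2]
    congr 1
    · -- first sums match after reindexing
      rw [show (2:ℕ) = 1 + 1 from rfl, ← Finset.map_add_right_Icc 1 n 1, Finset.sum_map]
      apply Finset.sum_congr rfl
      intro j hj
      obtain ⟨hj1, hjn⟩ := Finset.mem_Icc.1 hj
      have e : n + 1 - (j + 1) = n - j := by omega
      simp only [addRightEmbedding_apply, Nat.add_sub_cancel, e]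
    · -- second sums match
      apply Finset.sum_congr rfl
      intro k hk
      obtain ⟨hk1, hkn⟩ := Finset.mem_Icc.1 hk
      congr 2
      have e : n + 1 - k = (n - k) + 1 := by omega
      rw [e, pow_succ]; ring
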